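/- Fix n ≥ 1, d ≥ 4, k = ⌊d/2⌋, r = C(n+d,n) - 1. Let q ∈ P^r and S ⊂ P^n finite with ν_d(S) minimally spanning q. Assume |S| ≤ C(n+k-1,n) and that S imposes |S| independent conditions on ℂ[z_0,…,z_n]_{k-1}. Then S is the unique finite set of cardinality at most |S| whose degree-d Veronese image spans q; in particular q has rank |S| and the additive decomposition of the corresponding degree-d form into |S| d-th powers of linear forms is unique up to reordering and scaling of the linear forms. -/

import Mathlib

open MvPolynomial Function

/-- Complex projective `n`-space, as the projectivization of `ℂ^{n+1}`. -/
abbrev Pn (n : ℕ) := Projectivization ℂ (Fin (n + 1) → ℂ)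

/-- The linear span (as a vector subspace) of a set of projective points. -/
def pspan {V : Type*} [AddCommGroup V] [Module ℂ V] (E : Set (Projectivization ℂ V)) :
    Submodule ℂ V :=
  Submodule.span ℂ (Projectivization.rep '' E)

/-- `E` minimally spans `q`: `q` lies in the span of `E` but in the span of no proper subset. -/
def MinimallySpans {V : Type*} [AddCommGroup V] [Module ℂ V]
    (E : Set (Projectivization ℂ V)) (q : Projectivization ℂ V) : Prop :=
  q.rep ∈ pspan E ∧ ∀ E' ⊂ E, q.rep ∉ pspan E'

/-- `E ⊂ P^n` imposes `|E|` independent conditions on degree-`t` forms: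
the evaluation map from `ℂ[z_0,…,z_n]_t` to `ℂ^E` is surjective. -/
def ImposesIndep (n t : ℕ) (E : Set (Pn n)) : Prop :=
  Surjective (fun (g : homogeneousSubmodule (Fin (n + 1)) ℂ t) (p : E) =>
    eval (Projectivization.rep (p : Pn n)) (g : MvPolynomial (Fin (n + 1)) ℂ))

/-- The `d`-th power of the linear form with coefficient vector `v`. -/
noncomputable def linPow (n d : ℕ) (v : Fin (n + 1) → ℂ) : MvPolynomial (Fin (n + 1)) ℂ :=
  (∑ i, C (v i) * X i) ^ d

/-- The span of the image under the degree-`d` Veronese embedding of a set `S ⊂ P^n`,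
as a subspace of the polynomial ring. -/
noncomputable def veroneseSpan (n d : ℕ) (S : Set (Pn n)) : Submodule ℂ (MvPolynomial (Fin (n + 1)) ℂ) :=
  Submodule.span ℂ ((fun p : Pn n => linPow n d (Projectivization.rep p)) '' S)

/-- `ν_d(S)` minimally spans the point `q` of `P^r = P(ℂ[z_0,…,z_n]_d)`. -/
def MinSpansVer (n d : ℕ) (S : Set (Pn n))
    (q : Projectivization ℂ (homogeneousSubmodule (Fin (n + 1)) ℂ d)) : Prop :=
  (Projectivization.rep q).1 ∈ veroneseSpan n d S ∧
    ∀ S' ⊂ S, (Projectivization.rep q).1 ∉ veroneseSpan n d S'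

/-- `S ⊂ P^m` is in linearly general position: every subset of cardinality at most `m + 1`
is linearly independent. -/
def LGP (m : ℕ) (S : Set (Pn m)) : Prop :=
  ∀ B ⊆ S, B.Finite → B.ncard ≤ m + 1 →
    LinearIndependent ℂ (fun p : B => Projectivization.rep (p : Pn m))

/-- The evaluation linear map from degree-`t` forms to `ℂ^E`. -/
noncomputable def evalLM (n t : ℕ) (E : Set (Pn n)) :
    homogeneousSubmodule (Fin (n + 1)) ℂ t →ₗ[ℂ] (E → ℂ) where
  toFun g p := eval (Projectivization.rep (p : Pn n)) g.1
  map_add' g₁ g₂ := by funext p; simp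
  map_smul' c g := by funext p; simp [MvPolynomial.smul_eval]

/-! ### Auxiliary material for the proof of `stmt_14`. -/

section Aux

/-- The linear form with coefficient vector `v`. -/
noncomputable def lin (n : ℕ) (v : Fin (n + 1) → ℂ) : MvPolynomial (Fin (n + 1)) ℂ :=
  ∑ i, C (v i) * X i

variable {n : ℕ}

lemma eval_lin (v u : Fin (n + 1) → ℂ) : eval u (lin n v) = ∑ i, v i * u i := by
  simp [lin]

lemma lin_isHomogeneous (v : Fin (n + 1) → ℂ) : (lin n v).IsHomogeneous 1 := by
  apply IsHomogeneous.sum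
  intro i _
  exact isHomogeneous_C_mul_X _ _

lemma lin_ne_zero {v : Fin (n + 1) → ℂ} (hv : v ≠ 0) : lin n v ≠ 0 := by
  intro h
  apply hv
  funext i
  have := congrArg (eval (Pi.single i 1)) h
  rw [eval_lin] at this
  simpa [Pi.single_apply, mul_ite, Finset.sum_ite_eq'] using this

lemma pderiv_lin (j : Fin (n + 1)) (v : Fin (n + 1) → ℂ) :
    pderiv j (lin n v) = C (v j) := by
  rw [lin, map_sum]
  simp [pderiv_X, Pi.single_apply, mul_ite, Finset.sum_ite_eq']

lemma pderiv_lin_pow (j : Fin (n + 1)) (v : Fin (n + 1) → ℂ) (e : ℕ) :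
    pderiv j (lin n v ^ e) = ((e : ℂ) * v j) • lin n v ^ (e - 1) := by
  rw [Derivation.leibniz_pow, pderiv_lin]
  simp only [smul_eq_mul, nsmul_eq_mul, smul_eq_C_mul, map_mul, map_natCast]
  ring

lemma degree_single_one (i : Fin (n + 1)) : (Finsupp.single i 1).degree = 1 := by
  simp [Finsupp.degree_apply, Finsupp.support_single_ne_zero i one_ne_zero]

lemma keyB {J : Type*} (s : Finset J) (μ : J → ℂ) (v : J → (Fin (n + 1) → ℂ)) :
    ∀ (m e : ℕ), m ≤ e → (∑ j ∈ s, μ j • lin n (v j) ^ e) = 0 →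
      ∀ α : Fin (n + 1) →₀ ℕ, α.degree = m →
        (∑ j ∈ s, (μ j * ∏ i, v j i ^ α i) • lin n (v j) ^ (e - m)) = 0 := by
  intro m
  induction m with
  | zero =>
    intro e he h0 α hα
    have hα0 : α = 0 := (Finsupp.degree_eq_zero_iff α).mp hα
    subst hα0
    simpa using h0
  | succ m ih =>
    intro e he h0 α hα
    have hne : α ≠ 0 := by
      intro h; rw [h, map_zero] at hα; omega
    obtain ⟨i, hi⟩ : ∃ i, α i ≠ 0 := by
      by_contra h
      push_neg at h
      exact hne (Finsupp.ext fun i => h i)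
    have hle : Finsupp.single i 1 ≤ α := Finsupp.single_le_iff.mpr (Nat.one_le_iff_ne_zero.mpr hi)
    set α' := α - Finsupp.single i 1 with hα'
    have hadd : α' + Finsupp.single i 1 = α := tsub_add_cancel_of_le hle
    have hdeg : α'.degree = m := by
      have h1 : (α' + Finsupp.single i 1).degree = α'.degree + 1 := by
        have := degree_single_one (n := n) i
        simp only [Finsupp.degree_eq_weight_one] at this ⊢
        rw [map_add, this]
      rw [hadd, hα] at h1
      omega
    have H := ih e (le_trans (Nat.le_succ m) he) h0 α' hdeg
    have H2 := congrArg (pderiv i) H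
    rw [map_sum, map_zero] at H2
    have H3 : ∀ j ∈ s, pderiv i ((μ j * ∏ l, v j l ^ α' l) • lin n (v j) ^ (e - m))
        = ((e - m : ℕ) : ℂ) • ((μ j * ∏ l, v j l ^ α l) • lin n (v j) ^ (e - (m + 1))) := by
      intro j _
      rw [Derivation.map_smul, pderiv_lin_pow]
      have hprod : (∏ l, v j l ^ α l) = (∏ l, v j l ^ α' l) * v j i := by
        conv_lhs => rw [← hadd]
        simp only [Finsupp.add_apply, pow_add]
        rw [Finset.prod_mul_distrib]
        congr 1
        simp [Finsupp.single_apply, pow_ite, Finset.prod_ite_eq']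
      rw [hprod, smul_smul, smul_smul]
      congr 1
      ring
    rw [Finset.sum_congr rfl H3, ← Finset.smul_sum] at H2
    rcases smul_eq_zero.mp H2 with h | h
    · exfalso
      have : e - m ≠ 0 := by omega
      exact this (by exact_mod_cast h)
    · exact h

lemma keyBH {J : Type*} (s : Finset J) (μ : J → ℂ) (v : J → (Fin (n + 1) → ℂ))
    (m e : ℕ) (hme : m ≤ e) (h0 : (∑ j ∈ s, μ j • lin n (v j) ^ e) = 0)
    {G : MvPolynomial (Fin (n + 1)) ℂ} (hG : G.IsHomogeneous m) :
    ∑ j ∈ s, (μ j * eval (v j) G) • lin n (v j) ^ (e - m) = 0 := by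
  have hev : ∀ j, eval (v j) G = ∑ α ∈ G.support, coeff α G * ∏ i, v j i ^ α i := by
    intro j
    conv_lhs => rw [G.as_sum]
    rw [map_sum]
    simp [eval_monomial, Finsupp.prod_pow]
  simp_rw [hev, Finset.mul_sum, Finset.sum_smul]
  rw [Finset.sum_comm]
  refine Finset.sum_eq_zero fun α hα => ?_
  have hdeg : α.degree = m := by
    have h2 := hG (mem_support_iff.mp hα)
    rw [Finsupp.degree_eq_weight_one]
    exact h2
  have hk := keyB s μ v m e hme h0 α hdeg
  calc ∑ j ∈ s, (μ j * (coeff α G * ∏ i, v j i ^ α i)) • lin n (v j) ^ (e - m)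
      = coeff α G • ∑ j ∈ s, (μ j * ∏ i, v j i ^ α i) • lin n (v j) ^ (e - m) := by
        rw [Finset.smul_sum]
        refine Finset.sum_congr rfl fun j _ => ?_
        rw [smul_smul]
        congr 1
        ring
    _ = 0 := by rw [hk, smul_zero]

lemma exists_sep {t : ℕ} {S : Set (Pn n)} (hind : ImposesIndep n t S) {p : Pn n} (hp : p ∈ S) :
    ∃ F : MvPolynomial (Fin (n + 1)) ℂ, F.IsHomogeneous t ∧
      eval (Projectivization.rep p) F = 1 ∧
      ∀ q ∈ S, q ≠ p → eval (Projectivization.rep q) F = 0 := by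
  classical
  obtain ⟨g, hg⟩ := hind (fun x : S => if (x : Pn n) = p then 1 else 0)
  refine ⟨g.1, (mem_homogeneousSubmodule _ _).mp g.2, ?_, ?_⟩
  · have := congrFun hg ⟨p, hp⟩
    simpa using this
  · intro q hq hqp
    have := congrFun hg ⟨q, hq⟩
    simpa [hqp] using this

lemma exists_sep' {t : ℕ} {S : Set (Pn n)} (hind : ImposesIndep n t S) {p : Pn n} (hp : p ∈ S)
    (m : ℕ) (hm : t ≤ m) :
    ∃ G : MvPolynomial (Fin (n + 1)) ℂ, G.IsHomogeneous m ∧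
      eval (Projectivization.rep p) G ≠ 0 ∧
      ∀ q ∈ S, q ≠ p → eval (Projectivization.rep q) G = 0 := by
  obtain ⟨F, hF, hF1, hF0⟩ := exists_sep hind hp
  obtain ⟨i0, hi0⟩ : ∃ i, Projectivization.rep p i ≠ 0 := by
    have := Projectivization.rep_nonzero p
    rw [Function.ne_iff] at this
    simpa using this
  refine ⟨F * X i0 ^ (m - t), ?_, ?_, ?_⟩
  · have := hF.mul (isHomogeneous_X_pow (R := ℂ) i0 (m - t))
    rwa [Nat.add_sub_cancel' hm] at this
  · simp [hF1, hi0, pow_ne_zero]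
  · intro q hq hqp
    simp [hF0 q hq hqp]

lemma exists_ann {v w : Fin (n + 1) → ℂ} (hw : w ≠ 0) (hvw : ∀ c : ℂ, v ≠ c • w) :
    ∃ u : Fin (n + 1) → ℂ, (∑ i, u i * w i) = 0 ∧ (∑ i, u i * v i) ≠ 0 := by
  obtain ⟨j, hj⟩ : ∃ j, w j ≠ 0 := by
    rw [Function.ne_iff] at hw; simpa using hw
  obtain ⟨i, hi⟩ : ∃ i, w j * v i - w i * v j ≠ 0 := by
    by_contra h
    push_neg at h
    apply hvw (v j / w j)
    funext l
    have hl := h l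
    have : w j * v l = w l * v j := by linear_combination hl
    rw [Pi.smul_apply, smul_eq_mul, div_mul_eq_mul_div, eq_div_iff hj]
    linear_combination this
  refine ⟨fun l => w j * (if l = i then 1 else 0) - w i * (if l = j then 1 else 0), ?_, ?_⟩
  · have : ∀ x : Fin (n + 1) → ℂ,
        (∑ l, (w j * (if l = i then 1 else 0) - w i * (if l = j then 1 else 0)) * x l)
          = w j * x i - w i * x j := by
      intro x
      simp [sub_mul, Finset.sum_sub_distrib, mul_assoc, ite_mul, Finset.sum_ite_eq']
    rw [this]
    ring
  · have : ∀ x : Fin (n + 1) → ℂ,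
        (∑ l, (w j * (if l = i then 1 else 0) - w i * (if l = j then 1 else 0)) * x l)
          = w j * x i - w i * x j := by
      intro x
      simp [sub_mul, Finset.sum_sub_distrib, mul_assoc, ite_mul, Finset.sum_ite_eq']
    rw [this]
    exact hi

end Aux

set_option maxHeartbeats 1000000

/-- Theorem 1 (b): if `ν_d(S)` minimally spans `q`, `|S| ≤ C(n+k-1,n)` with
`k = ⌊d/2⌋`, and `S` imposes independent conditions on degree-`(k-1)` forms, then `S` is the
unique set of cardinality at most `|S|` whose Veronese image spans `q`; in particular `q` has
rank `|S|` and the additive decomposition is unique. -/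
theorem stmt_14 (n d : ℕ) (hn : 1 ≤ n) (hd : 4 ≤ d)
    (q : Projectivization ℂ (homogeneousSubmodule (Fin (n + 1)) ℂ d))
    (S : Set (Pn n)) (hS : S.Finite) (hmin : MinSpansVer n d S q)
    (hcard : S.ncard ≤ Nat.choose (n + d / 2 - 1) n)
    (hind : ImposesIndep n (d / 2 - 1) S) :
    ∀ A : Set (Pn n), A.Finite → A.ncard ≤ S.ncard →
      (Projectivization.rep q).1 ∈ veroneseSpan n d A → A = S := by
  classical
  intro A hA hApS hAq
  haveI fS : Fintype S := hS.fintype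
  haveI fA : Fintype A := hA.fintype
  set k := d / 2 with hk
  set t := d / 2 - 1 with htdef
  set F : MvPolynomial (Fin (n + 1)) ℂ := (Projectivization.rep q).1 with hFdef
  -- representation of F over S
  obtain ⟨c, hc⟩ : ∃ c : S → ℂ,
      ∑ p : S, c p • lin n (Projectivization.rep (p : Pn n)) ^ d = F := by
    have hx := hmin.1
    rw [veroneseSpan, Set.image_eq_range] at hx
    exact (Submodule.mem_span_range_iff_exists_fun ℂ).mp hx
  -- representation of F over A
  obtain ⟨e, he⟩ : ∃ e : A → ℂ,
      ∑ a : A, e a • lin n (Projectivization.rep (a : Pn n)) ^ d = F := by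
    have hx := hAq
    rw [veroneseSpan, Set.image_eq_range] at hx
    exact (Submodule.mem_span_range_iff_exists_fun ℂ).mp hx
  -- all coefficients over S are nonzero, by minimality
  have hc0 : ∀ p : S, c p ≠ 0 := by
    intro p hp0
    refine hmin.2 (S \ {(p : Pn n)}) (Set.sdiff_singleton_ssubset.mpr p.2) ?_
    rw [veroneseSpan, ← hFdef, ← hc]
    have hsum : ∑ r : S, c r • lin n (Projectivization.rep (r : Pn n)) ^ d
        = ∑ r ∈ Finset.univ.erase p, c r • lin n (Projectivization.rep (r : Pn n)) ^ d := by
      rw [← Finset.sum_erase_add _ _ (Finset.mem_univ p), hp0, zero_smul, add_zero]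
    rw [hsum]
    refine Submodule.sum_mem _ fun r hr => Submodule.smul_mem _ _ (Submodule.subset_span ?_)
    refine ⟨(r : Pn n), ⟨r.2, ?_⟩, rfl⟩
    intro hmem
    exact Finset.ne_of_mem_erase hr (Subtype.ext hmem)
  -- the combined relation in degree d
  have hzero : ∑ j : (↥S ⊕ ↥A),
      (Sum.elim (fun p : S => c p) (fun a : A => -(e a)) j)
        • lin n ((Sum.elim (fun p : S => Projectivization.rep (p : Pn n))
            (fun a : A => Projectivization.rep (a : Pn n))) j) ^ d = 0 := by
    rw [Fintype.sum_sum_type]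
    simp only [Sum.elim_inl, Sum.elim_inr, neg_smul, Finset.sum_neg_distrib]
    rw [hc, he, add_neg_cancel]
  set fk : Pn n → MvPolynomial (Fin (n + 1)) ℂ
    := fun p => lin n (Projectivization.rep p) ^ k with hfk
  set U := Submodule.span ℂ (fk '' A) with hUdef
  set VS := Submodule.span ℂ (fk '' S) with hVSdef
  haveI : FiniteDimensional ℂ U := FiniteDimensional.span_of_finite ℂ (hA.image fk)
  -- key step : VS ≤ U
  have hVU : VS ≤ U := by
    rw [hVSdef, Submodule.span_le]
    rintro y ⟨p0, hp0, rfl⟩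
    obtain ⟨G, hGhom, hGp0, hG0⟩ := exists_sep' hind hp0 (d - k) (by omega)
    have hkey := keyBH (Finset.univ : Finset (↥S ⊕ ↥A)) _ _ (d - k) d (by omega) hzero hGhom
    have hddk : d - (d - k) = k := by omega
    rw [hddk, Fintype.sum_sum_type] at hkey
    simp only [Sum.elim_inl, Sum.elim_inr] at hkey
    have hSsum : ∑ p : S,
        (c p * eval (Projectivization.rep (p : Pn n)) G)
          • lin n (Projectivization.rep (p : Pn n)) ^ k
        = (c ⟨p0, hp0⟩ * eval (Projectivization.rep ((⟨p0, hp0⟩ : S) : Pn n)) G)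
          • lin n (Projectivization.rep ((⟨p0, hp0⟩ : S) : Pn n)) ^ k := by
      refine Finset.sum_eq_single_of_mem (⟨p0, hp0⟩ : S) (Finset.mem_univ _)
        fun r _ hr => ?_
      have hz : eval (Projectivization.rep (r : Pn n)) G = 0 :=
        hG0 (r : Pn n) r.2 fun hh => hr (Subtype.ext hh)
      rw [hz, mul_zero, zero_smul]
    rw [hSsum] at hkey
    have hs0 : (c ⟨p0, hp0⟩ * eval (Projectivization.rep p0) G) ≠ 0 :=
      mul_ne_zero (hc0 _) hGp0
    have hmem : (c ⟨p0, hp0⟩ * eval (Projectivization.rep p0) G)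
        • lin n (Projectivization.rep p0) ^ k ∈ U := by
      have heq : (c ⟨p0, hp0⟩ * eval (Projectivization.rep p0) G)
          • lin n (Projectivization.rep p0) ^ k
          = ∑ a : A, (e a * eval (Projectivization.rep (a : Pn n)) G)
              • lin n (Projectivization.rep (a : Pn n)) ^ k := by
        have := hkey
        rw [add_eq_zero_iff_eq_neg] at this
        rw [this, ← Finset.sum_neg_distrib]
        refine Finset.sum_congr rfl fun a _ => ?_
        rw [← neg_smul]
        ring_nf
      rw [heq]
      refine Submodule.sum_mem _ fun a _ => Submodule.smul_mem _ _ (Submodule.subset_span ?_)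
      exact ⟨(a : Pn n), a.2, rfl⟩
    have : fk p0 = (c ⟨p0, hp0⟩ * eval (Projectivization.rep p0) G)⁻¹
        • ((c ⟨p0, hp0⟩ * eval (Projectivization.rep p0) G)
          • lin n (Projectivization.rep p0) ^ k) := by
      rw [smul_smul, inv_mul_cancel₀ hs0, one_smul, hfk]
    rw [this]
    exact Submodule.smul_mem _ _ hmem
  -- linear independence of the k-th powers over S
  have hli : LinearIndependent ℂ (fun p : S => fk (p : Pn n)) := by
    rw [Fintype.linearIndependent_iff]
    intro g hg p
    obtain ⟨Fp, hFp, hFp1, hFp0⟩ := exists_sep hind p.2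
    obtain ⟨i0, hi0⟩ : ∃ i, Projectivization.rep (p : Pn n) i ≠ 0 := by
      have := Projectivization.rep_nonzero (p : Pn n)
      rw [Function.ne_iff] at this
      simpa using this
    have hHhom : (Fp * X i0).IsHomogeneous k := by
      have := hFp.mul (isHomogeneous_X (R := ℂ) i0)
      rwa [show t + 1 = k by omega] at this
    have hg' : ∑ r : S, g r • lin n (Projectivization.rep (r : Pn n)) ^ k = 0 := hg
    have hkey := keyBH (Finset.univ : Finset ↥S) g
      (fun r : S => Projectivization.rep (r : Pn n)) k k le_rfl hg' hHhom
    simp only [Nat.sub_self, pow_zero, smul_eq_C_mul, mul_one] at hkey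
    replace hkey := congrArg (constantCoeff (σ := Fin (n + 1)) (R := ℂ)) hkey
    rw [map_sum (constantCoeff (σ := Fin (n + 1)) (R := ℂ)), map_zero] at hkey
    simp only [constantCoeff_C] at hkey
    have hscal := hkey
    have hred : ∑ r : S, g r * MvPolynomial.eval (Projectivization.rep (r : Pn n)) (Fp * X i0)
        = g p * MvPolynomial.eval (Projectivization.rep (p : Pn n)) (Fp * X i0) := by
      refine Finset.sum_eq_single_of_mem p (Finset.mem_univ _) fun r _ hr => ?_
      have hz : eval (Projectivization.rep (r : Pn n)) Fp = 0 :=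
        hFp0 (r : Pn n) r.2 fun hh => hr (Subtype.ext hh)
      simp [hz]
    rw [hred, map_mul, hFp1, one_mul, eval_X] at hscal
    exact (mul_eq_zero.mp hscal).resolve_right hi0
  -- dimension count
  have hcardS : Fintype.card S = S.ncard := by
    rw [← Nat.card_coe_set_eq, Nat.card_eq_fintype_card]
  have hcardA : Fintype.card A = A.ncard := by
    rw [← Nat.card_coe_set_eq, Nat.card_eq_fintype_card]
  have hrankVS : Module.finrank ℂ VS = S.ncard := by
    rw [hVSdef, Set.image_eq_range, finrank_span_eq_card hli, hcardS]
  have hrankU : Module.finrank ℂ U ≤ A.ncard := by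
    rw [hUdef, Set.image_eq_range]
    refine le_trans (finrank_span_le_card _) ?_
    rw [Set.toFinset_range]
    exact le_trans Finset.card_image_le (by simp [hcardA])
  have hrankVU : Module.finrank ℂ VS ≤ Module.finrank ℂ U := Submodule.finrank_mono hVU
  have hSA : S.ncard ≤ A.ncard := by omega
  have hUVS : VS = U := Submodule.eq_of_le_of_finrank_le hVU (by omega)
  -- A ⊆ S
  have hAS : A ⊆ S := by
    intro a ha
    by_contra haS
    have hmem : fk a ∈ VS := by
      rw [hUVS]
      exact Submodule.subset_span ⟨a, ha, rfl⟩
    obtain ⟨lam, hlam⟩ : ∃ lam : S → ℂ,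
        ∑ p : S, lam p • lin n (Projectivization.rep (p : Pn n)) ^ k
          = lin n (Projectivization.rep a) ^ k := by
      rw [hVSdef, Set.image_eq_range] at hmem
      exact (Submodule.mem_span_range_iff_exists_fun ℂ).mp hmem
    have hz2 : ∑ j : (↥S ⊕ Unit),
        (Sum.elim (fun p : S => lam p) (fun _ => (-1 : ℂ)) j)
          • lin n ((Sum.elim (fun p : S => Projectivization.rep (p : Pn n))
              (fun _ => Projectivization.rep a)) j) ^ k = 0 := by
      rw [Fintype.sum_sum_type]
      simp only [Sum.elim_inl, Sum.elim_inr]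
      rw [hlam]
      simp
    have hlam0 : ∀ p : S, lam p = 0 := by
      intro p
      have hvw : ∀ cc : ℂ, Projectivization.rep (p : Pn n) ≠ cc • Projectivization.rep a := by
        intro cc hcc
        have hcc0 : cc ≠ 0 := by
          intro h
          rw [h, zero_smul] at hcc
          exact Projectivization.rep_nonzero (p : Pn n) hcc
        have hpa : (p : Pn n) = a := by
          rw [← Projectivization.mk_rep (p : Pn n), ← Projectivization.mk_rep a,
            Projectivization.mk_eq_mk_iff']
          exact ⟨cc, hcc.symm⟩
        exact haS (hpa ▸ p.2)
      obtain ⟨u, hu0, hup⟩ := exists_ann (Projectivization.rep_nonzero a) hvw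
      obtain ⟨Fp, hFp, hFp1, hFp0⟩ := exists_sep hind p.2
      have hHhom : (lin n u * Fp).IsHomogeneous k := by
        have := (lin_isHomogeneous u).mul hFp
        rwa [show 1 + t = k by omega] at this
      have hkey := keyBH (Finset.univ : Finset (↥S ⊕ Unit)) _ _ k k le_rfl hz2 hHhom
      simp only [Nat.sub_self, pow_zero, smul_eq_C_mul, mul_one] at hkey
      replace hkey := congrArg (constantCoeff (σ := Fin (n + 1)) (R := ℂ)) hkey
      rw [map_sum (constantCoeff (σ := Fin (n + 1)) (R := ℂ)), map_zero] at hkey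
      simp only [constantCoeff_C] at hkey
      have hscal := hkey
      rw [Fintype.sum_sum_type] at hscal
      simp only [Sum.elim_inl, Sum.elim_inr] at hscal
      have hevala : eval (Projectivization.rep a) (lin n u * Fp) = 0 := by
        rw [map_mul, eval_lin, hu0, zero_mul]
      rw [hevala] at hscal
      have hred : ∑ r : S, lam r * MvPolynomial.eval (Projectivization.rep (r : Pn n)) (lin n u * Fp)
          = lam p * MvPolynomial.eval (Projectivization.rep (p : Pn n)) (lin n u * Fp) := by
        refine Finset.sum_eq_single_of_mem p (Finset.mem_univ _) fun r _ hr => ?_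
        have hz : eval (Projectivization.rep (r : Pn n)) Fp = 0 :=
          hFp0 (r : Pn n) r.2 fun hh => hr (Subtype.ext hh)
        simp [hz]
      simp only [Finset.univ_unique, Finset.sum_singleton, hevala, mul_zero, add_zero] at hscal
      rw [hred, map_mul, hFp1, mul_one, eval_lin] at hscal
      exact (mul_eq_zero.mp hscal).resolve_right hup
    have hfk0 : lin n (Projectivization.rep a) ^ k = 0 := by
      rw [← hlam]
      simp [hlam0]
    have hlz : lin n (Projectivization.rep a) = 0 :=
      pow_eq_zero_iff (by omega : k ≠ 0) |>.mp hfk0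
    exact lin_ne_zero (Projectivization.rep_nonzero a) hlz
  exact Set.eq_of_subset_of_ncard_le hAS (by omega) hS
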